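/- Let n ≥ 2, 1 ≤ k ≤ n−1, s > 0, p a prime, and A ⊆ F_p^n. Suppose there exists an affine hyperplane H = x₀ + H₀ (where H₀ ∈ G(n−1, F_p^n) and x₀ ∈ F_p^n) with #(A ∩ H) ≥ p^{s+n−k−1}. Then every V ∈ E_s(A) satisfies V ⊆ H₀; consequently #E_s(A) ≤ #G(n−k, H₀) ≤ C(n,k) · p^{(k−1)(n−k)} for a constant C(n,k) independent of p. -/
import Mathlib

set_option synthInstance.maxHeartbeats 400000

open Module Submodule

section Auxiliary

variable {K : Type*} [Field K]

/-- Every subspace of `K^d` admits a coordinate set `S` of size `dim V` such that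
vanishing on `S` forces an element of `V` to vanish. -/
lemma exists_coord_transversal {d : ℕ} (V : Submodule K (Fin d → K)) :
    ∃ S : Finset (Fin d), S.card = finrank K V ∧
      ∀ x ∈ V, (∀ i ∈ S, x i = 0) → x = 0 := by
  classical
  set m := finrank K V with hm
  have hmd : m ≤ d := by
    have := Submodule.finrank_le V
    rwa [Module.finrank_fin_fun] at this
  set e : Fin d → (Fin d → K) := fun i j => if i = j then 1 else 0 with he
  set g : Fin d → ((Fin d → K) ⧸ V) := fun i => V.mkQ (e i) with hg
  have hrange : Set.range e = Set.range (Pi.basisFun K (Fin d)) := by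
    ext x
    simp only [Set.mem_range]
    constructor
    · rintro ⟨i, rfl⟩
      exact ⟨i, by funext j; simp [he, Pi.basisFun_apply, Pi.single_apply, eq_comm]⟩
    · rintro ⟨i, rfl⟩
      exact ⟨i, by funext j; simp [he, Pi.basisFun_apply, Pi.single_apply, eq_comm]⟩
  have hspan : Submodule.span K (Set.range g) = ⊤ := by
    have : Set.range g = V.mkQ '' (Set.range e) := by
      rw [← Set.range_comp]; rfl
    rw [this, hrange, ← Submodule.map_span, (Pi.basisFun K (Fin d)).span_eq,
      Submodule.map_top, Submodule.range_mkQ]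
  obtain ⟨b, hbt, hbspan, hbind⟩ := exists_linearIndependent K (Set.range g)
  rw [hspan] at hbspan
  have hbfin : b.Finite := (Set.finite_range g).subset hbt
  haveI : Fintype b := hbfin.fintype
  have hbcard : b.toFinset.card = d - m := by
    have h1 : finrank K (Submodule.span K b) = b.toFinset.card :=
      finrank_span_set_eq_card hbind
    rw [hbspan, finrank_top] at h1
    have h2 : finrank K ((Fin d → K) ⧸ V) + finrank K V = finrank K (Fin d → K) :=
      Submodule.finrank_quotient_add_finrank V
    rw [Module.finrank_fin_fun] at h2
    omega
  choose u hu using fun y : b => hbt y.2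
  have hu_inj : Function.Injective u := by
    intro y z hyz
    apply Subtype.ext
    rw [← hu y, ← hu z, hyz]
  set T : Finset (Fin d) := Finset.image u Finset.univ with hT
  have hTcard : T.card = d - m := by
    rw [hT, Finset.card_image_of_injective _ hu_inj, Finset.card_univ,
      ← Set.toFinset_card, hbcard]
  refine ⟨Tᶜ, ?_, ?_⟩
  · rw [Finset.card_compl, hTcard, Fintype.card_fin]; omega
  · intro x hxV hxS
    have hxT : ∀ i, i ∉ T → x i = 0 := fun i hi => hxS i (Finset.mem_compl.2 hi)
    have h0 : (0 : (Fin d → K) ⧸ V) = ∑ i ∈ T, x i • g i := by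
      have hx0 : V.mkQ x = 0 := (Submodule.Quotient.mk_eq_zero V).2 hxV
      have hxe : x = ∑ i, x i • e i := pi_eq_sum_univ x
      calc (0 : (Fin d → K) ⧸ V) = V.mkQ x := hx0.symm
        _ = ∑ i, x i • g i := by
            conv_lhs => rw [hxe]
            rw [map_sum]
            simp [hg, map_smul]
        _ = ∑ i ∈ T, x i • g i := by
            refine (Finset.sum_subset (Finset.subset_univ T) ?_).symm
            intro i _ hiT
            rw [hxT i hiT, zero_smul]
    rw [Finset.sum_image (fun y _ z _ h => hu_inj h)] at h0
    have h0' : ∑ y : b, x (u y) • (y : (Fin d → K) ⧸ V) = 0 := by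
      rw [← h0.symm]
      · exact Finset.sum_congr rfl fun y _ => by rw [hu y]
    have hzero := Fintype.linearIndependent_iff.mp hbind (fun y => x (u y)) h0'
    funext i
    show x i = 0
    by_cases hiT : i ∈ T
    · rw [hT] at hiT
      obtain ⟨y, _, rfl⟩ := Finset.mem_image.mp hiT
      exact hzero y
    · exact hxT i hiT

/-- Every `m`-dimensional subspace of `K^d` is the graph of a linear map over some
coordinate set of size `m`. -/
lemma exists_graph_repr {d : ℕ} (V : Submodule K (Fin d → K)) :
    ∃ S : Finset (Fin d), S.card = finrank K V ∧
      ∃ g : (↥S → K) →ₗ[K] (↥(Sᶜ) → K),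
        V = LinearMap.ker (LinearMap.funLeft K K ((↑) : ↥(Sᶜ) → Fin d)
              - g ∘ₗ LinearMap.funLeft K K ((↑) : ↥S → Fin d)) := by
  classical
  obtain ⟨S, hScard, hSker⟩ := exists_coord_transversal V
  set πS := LinearMap.funLeft K K ((↑) : ↥S → Fin d) with hπS
  set πC := LinearMap.funLeft K K ((↑) : ↥(Sᶜ) → Fin d) with hπC
  set f : ↥V →ₗ[K] (↥S → K) := πS ∘ₗ V.subtype with hf
  have hfinj : Function.Injective f := by
    rw [injective_iff_map_eq_zero]
    intro v hv
    apply Subtype.ext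
    refine hSker v v.2 fun i hi => ?_
    exact congrFun hv ⟨i, hi⟩
  have hdim : finrank K ↥V = finrank K (↥S → K) := by
    rw [Module.finrank_fintype_fun_eq_card, Fintype.card_coe, hScard]
  set e := f.linearEquivOfInjective hfinj hdim with hev
  have he : ∀ v : ↥V, e v = f v := fun v => f.linearEquivOfInjective_apply hfinj hdim v
  refine ⟨S, hScard, (πC ∘ₗ V.subtype) ∘ₗ (e.symm : (↥S → K) →ₗ[K] ↥V), ?_⟩
  ext x
  simp only [LinearMap.mem_ker, LinearMap.sub_apply, LinearMap.comp_apply,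
    LinearEquiv.coe_coe, sub_eq_zero]
  constructor
  · intro hx
    have h1 : e.symm (πS x) = ⟨x, hx⟩ := by
      apply e.injective
      rw [LinearEquiv.apply_symm_apply, he]
      rfl
    rw [h1]
    rfl
  · intro hx
    have hv1 : πS ((e.symm (πS x) : ↥V) : Fin d → K) = πS x := by
      have := he (e.symm (πS x))
      rw [LinearEquiv.apply_symm_apply] at this
      exact this.symm
    have hv2 : πC ((e.symm (πS x) : ↥V) : Fin d → K) = πC x := hx.symm
    have hxx : ((e.symm (πS x) : ↥V) : Fin d → K) = x := by
      funext i
      by_cases hi : i ∈ S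
      · exact congrFun hv1 ⟨i, hi⟩
      · exact congrFun hv2 ⟨i, Finset.mem_compl.2 hi⟩
    rw [← hxx]
    exact (e.symm (πS x)).2

end Auxiliary

/-- The number of `m`-dimensional subspaces of `𝔽_p^d` is at most `2^d · p^{m(d-m)}`. -/
lemma grassmannian_card_le (p : ℕ) [Fact p.Prime] (d m : ℕ) :
    Nat.card {V : Submodule (ZMod p) (Fin d → ZMod p) // finrank (ZMod p) ↥V = m}
      ≤ 2 ^ d * p ^ (m * (d - m)) := by
  classical
  set K := ZMod p with hK
  let eS : (S : {S : Finset (Fin d) // S.card = m}) → (↥S.1 ≃ Fin m) := fun S =>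
    Fintype.equivFinOfCardEq (by rw [Fintype.card_coe]; exact S.2)
  let eC : (S : {S : Finset (Fin d) // S.card = m}) → (↥(S.1ᶜ) ≃ Fin (d - m)) := fun S =>
    Fintype.equivFinOfCardEq
      (by rw [Fintype.card_coe, Finset.card_compl, S.2, Fintype.card_fin])
  let dec : {S : Finset (Fin d) // S.card = m} × (Fin m → Fin (d - m) → K) →
      Submodule K (Fin d → K) := fun q =>
    LinearMap.ker (LinearMap.funLeft K K ((↑) : ↥(q.1.1ᶜ) → Fin d)
      - (Matrix.toLin' (Matrix.of fun j i => q.2 ((eS q.1) i) ((eC q.1) j))) ∘ₗ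
          LinearMap.funLeft K K ((↑) : ↥q.1.1 → Fin d))
  have hsurj : ∀ W : {V : Submodule K (Fin d → K) // finrank K ↥V = m},
      ∃ q, dec q = W.1 := by
    intro W
    obtain ⟨S, hScard, g, hg⟩ := exists_graph_repr W.1
    rw [W.2] at hScard
    refine ⟨⟨⟨S, hScard⟩, fun a b =>
      LinearMap.toMatrix' g ((eC ⟨S, hScard⟩).symm b) ((eS ⟨S, hScard⟩).symm a)⟩, ?_⟩
    have hmat : (Matrix.of fun j i =>
        LinearMap.toMatrix' g ((eC ⟨S, hScard⟩).symm ((eC ⟨S, hScard⟩) j))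
          ((eS ⟨S, hScard⟩).symm ((eS ⟨S, hScard⟩) i))) = LinearMap.toMatrix' g := by
      ext j i
      simp
    show LinearMap.ker _ = W.1
    rw [hmat, Matrix.toLin'_toMatrix']
    exact hg.symm
  choose F hF using hsurj
  have hFinj : Function.Injective F := by
    intro W W' h
    apply Subtype.ext
    rw [← hF W, ← hF W', h]
  calc Nat.card {V : Submodule K (Fin d → K) // finrank K ↥V = m}
      ≤ Nat.card ({S : Finset (Fin d) // S.card = m} × (Fin m → Fin (d - m) → K)) :=
        Nat.card_le_card_of_injective F hFinj
    _ = d.choose m * p ^ (m * (d - m)) := by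
        rw [Nat.card_prod, Nat.card_fun, Nat.card_fun, Nat.card_zmod,
          Nat.card_eq_fintype_card (α := Fin m), Fintype.card_fin,
          Nat.card_eq_fintype_card, Fintype.card_finset_len, Fintype.card_fin,
          Nat.card_eq_fintype_card (α := Fin (d - m)), Fintype.card_fin,
          ← pow_mul, Nat.mul_comm (d - m) m]
    _ ≤ 2 ^ d * p ^ (m * (d - m)) := by
        apply Nat.mul_le_mul_right
        rcases le_or_gt m d with h | h
        · calc d.choose m ≤ ∑ i ∈ Finset.range (d + 1), d.choose i :=
              Finset.single_le_sum (f := fun i => d.choose i)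
                (fun _ _ => Nat.zero_le _) (Finset.mem_range.2 (by omega))
            _ = 2 ^ d := Nat.sum_range_choose d
        · rw [Nat.choose_eq_zero_of_lt h]
          exact Nat.zero_le _

/-- `excSet p n k s A` is the exceptional set
`E_s(A) = {V ∈ G(n-k, 𝔽_p^n) : #π_V(A) < p^s}`, where `π_V` is the quotient map
`𝔽_p^n → 𝔽_p^n/V` (so `#π_V(A)` counts the cosets `x + V`, `x ∈ A`). -/
def excSet (p n k : ℕ) (s : ℝ) (A : Set (Fin n → ZMod p)) :
    Set (Submodule (ZMod p) (Fin n → ZMod p)) :=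
  {V | Module.finrank (ZMod p) V = n - k ∧ (((⇑V.mkQ '' A).ncard : ℝ) < (p : ℝ) ^ s)}

/-- If some affine hyperplane `H = x₀ + H₀` satisfies
`#(A ∩ H) ≥ p^{s+n-k-1}`, then every `V ∈ E_s(A)` is contained in `H₀`;
consequently `#E_s(A) ≤ #G(n-k, H₀) ≤ C(n,k) · p^{(k-1)(n-k)}` with `C(n,k)`
independent of `p`. -/
theorem stmt_8 (n k : ℕ) (hn : 2 ≤ n) (hk1 : 1 ≤ k) (hkn : k ≤ n - 1)
    (s : ℝ) (hs : 0 < s) :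
    ∃ C : ℝ, ∀ p : ℕ, p.Prime → ∀ A : Set (Fin n → ZMod p),
      ∀ H₀ : Submodule (ZMod p) (Fin n → ZMod p),
        Module.finrank (ZMod p) H₀ = n - 1 →
      ∀ x₀ : Fin n → ZMod p,
        (p : ℝ) ^ (s + (n : ℝ) - k - 1) ≤
            ((A ∩ ((x₀ + ·) '' (H₀ : Set (Fin n → ZMod p)))).ncard : ℝ) →
        (∀ V ∈ excSet p n k s A, V ≤ H₀) ∧
        ((excSet p n k s A).ncard : ℝ) ≤
          ({V : Submodule (ZMod p) (Fin n → ZMod p) |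
              Module.finrank (ZMod p) V = n - k ∧ V ≤ H₀}.ncard : ℝ) ∧
        ({V : Submodule (ZMod p) (Fin n → ZMod p) |
            Module.finrank (ZMod p) V = n - k ∧ V ≤ H₀}.ncard : ℝ) ≤
          C * (p : ℝ) ^ ((k - 1) * (n - k)) := by
  classical
  refine ⟨2 ^ (n - 1), ?_⟩
  intro p hp A H₀ hH₀ x₀ hA
  haveI := Fact.mk hp
  have hp0 : (0 : ℝ) < (p : ℝ) := by exact_mod_cast hp.pos
  set H : Set (Fin n → ZMod p) := (x₀ + ·) '' (H₀ : Set (Fin n → ZMod p)) with hHdef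
  -- Part 1
  have hpart1 : ∀ V ∈ excSet p n k s A, V ≤ H₀ := by
    intro V hV
    obtain ⟨hVrank, hVsmall⟩ := hV
    by_contra hVle
    have hsup : V ⊔ H₀ = ⊤ := by
      apply Submodule.eq_top_of_finrank_eq
      have hlt : H₀ < V ⊔ H₀ :=
        lt_of_le_of_ne le_sup_right fun h => hVle (h ▸ le_sup_left)
      have h1 : n - 1 < finrank (ZMod p) ↥(V ⊔ H₀) :=
        hH₀ ▸ Submodule.finrank_lt_finrank_of_lt hlt
      have h2 := Submodule.finrank_le (V ⊔ H₀)
      rw [Module.finrank_fin_fun] at h2 ⊢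
      omega
    have hinf : finrank (ZMod p) ↥(V ⊓ H₀) = n - k - 1 := by
      have h3 := Submodule.finrank_sup_add_finrank_inf_eq V H₀
      rw [hsup, finrank_top, Module.finrank_fin_fun, hVrank, hH₀] at h3
      omega
    set B : Finset (Fin n → ZMod p) := (Set.toFinite (A ∩ H)).toFinset with hBdef
    have hBcard : (B.card : ℝ) = ((A ∩ H).ncard : ℝ) := by
      rw [Set.ncard_eq_toFinset_card (A ∩ H)]
    have h4 : Nat.card ↥(V ⊓ H₀) = p ^ (n - k - 1) := by
      rw [Nat.card_eq_fintype_card, card_eq_pow_finrank (K := ZMod p), ZMod.card, hinf]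
    have hWcard : ((V ⊓ H₀ : Submodule (ZMod p) (Fin n → ZMod p)) :
        Set (Fin n → ZMod p)).ncard = p ^ (n - k - 1) := by
      rw [← Nat.card_coe_set_eq, ← h4]
      exact Nat.card_congr (Equiv.subtypeEquivRight fun x => Iff.rfl)
    have key : B.card ≤ p ^ (n - k - 1) * (B.image V.mkQ).card := by
      apply Finset.card_le_mul_card_image
      intro c hc
      obtain ⟨y, hyB, hyc⟩ := Finset.mem_image.mp hc
      have hsub : {z ∈ B | V.mkQ z = c} ⊆
          (Set.toFinite ((V ⊓ H₀ : Submodule (ZMod p) (Fin n → ZMod p)) :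
            Set (Fin n → ZMod p))).toFinset.image (· + y) := by
        intro z hz
        obtain ⟨hzB, hzc⟩ := Finset.mem_filter.mp hz
        rw [Finset.mem_image]
        refine ⟨z - y, ?_, by ring⟩
        rw [Set.Finite.mem_toFinset]
        have hzA : z ∈ A ∩ H := (Set.Finite.mem_toFinset _).mp hzB
        have hyA : y ∈ A ∩ H := (Set.Finite.mem_toFinset _).mp hyB
        constructor
        · have h5 : V.mkQ z = V.mkQ y := by rw [hzc, hyc]
          rwa [Submodule.mkQ_apply, Submodule.mkQ_apply, Submodule.Quotient.eq] at h5
        · obtain ⟨hz1, hz2⟩ := hzA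
          obtain ⟨hy1, hy2⟩ := hyA
          obtain ⟨a, ha, haz⟩ := hz2
          obtain ⟨b, hb, hby⟩ := hy2
          have h6 : z - y = a - b := by rw [← haz, ← hby]; ring
          rw [h6]
          exact sub_mem ha hb
      calc {z ∈ B | V.mkQ z = c}.card
          ≤ ((Set.toFinite ((V ⊓ H₀ : Submodule (ZMod p) (Fin n → ZMod p)) :
              Set (Fin n → ZMod p))).toFinset.image (· + y)).card :=
            Finset.card_le_card hsub
        _ ≤ (Set.toFinite ((V ⊓ H₀ : Submodule (ZMod p) (Fin n → ZMod p)) :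
              Set (Fin n → ZMod p))).toFinset.card :=
            Finset.card_image_le
        _ = p ^ (n - k - 1) := by
            rw [← Set.ncard_eq_toFinset_card, hWcard]
    have himg : ((B.image V.mkQ).card : ℝ) ≤ ((⇑V.mkQ '' A).ncard : ℝ) := by
      have hsub : ((B.image V.mkQ : Finset _) : Set _) ⊆ ⇑V.mkQ '' A := by
        intro q hq
        rw [Finset.coe_image] at hq
        obtain ⟨z, hz, rfl⟩ := hq
        exact ⟨z, ((Set.Finite.mem_toFinset _).mp hz).1, rfl⟩
      have h7 := Set.ncard_le_ncard hsub (Set.toFinite _)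
      rw [Set.ncard_coe_finset] at h7
      exact_mod_cast h7
    have hcast : ((n - k - 1 : ℕ) : ℝ) = (n : ℝ) - k - 1 := by
      have h1 : k + 1 ≤ n := by omega
      rw [Nat.sub_sub, Nat.cast_sub h1]
      push_cast
      ring
    have hchain : (p : ℝ) ^ (s + (n : ℝ) - k - 1) < (p : ℝ) ^ (s + (n : ℝ) - k - 1) := by
      calc (p : ℝ) ^ (s + (n : ℝ) - k - 1) ≤ ((A ∩ H).ncard : ℝ) := hA
        _ = (B.card : ℝ) := hBcard.symm
        _ ≤ ((p : ℝ) ^ (n - k - 1 : ℕ)) * ((B.image V.mkQ).card : ℝ) := by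
            exact_mod_cast key
        _ ≤ ((p : ℝ) ^ (n - k - 1 : ℕ)) * ((⇑V.mkQ '' A).ncard : ℝ) :=
            mul_le_mul_of_nonneg_left himg (by positivity)
        _ < ((p : ℝ) ^ (n - k - 1 : ℕ)) * ((p : ℝ) ^ s) :=
            mul_lt_mul_of_pos_left hVsmall (by positivity)
        _ = (p : ℝ) ^ (s + (n : ℝ) - k - 1) := by
            rw [← Real.rpow_natCast (p : ℝ) (n - k - 1), ← Real.rpow_add hp0, hcast]
            ring_nf
    exact absurd hchain (lt_irrefl _)
  haveI : Finite (Submodule (ZMod p) (Fin n → ZMod p)) :=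
    Finite.of_injective (fun W => (W : Set (Fin n → ZMod p))) SetLike.coe_injective
  refine ⟨hpart1, ?_, ?_⟩
  · have hsubset : excSet p n k s A ⊆
        {V : Submodule (ZMod p) (Fin n → ZMod p) |
          finrank (ZMod p) V = n - k ∧ V ≤ H₀} :=
      fun V hV => ⟨hV.1, hpart1 V hV⟩
    exact_mod_cast Set.ncard_le_ncard hsubset (Set.toFinite _)
  · set G : Set (Submodule (ZMod p) (Fin n → ZMod p)) :=
      {V | finrank (ZMod p) V = n - k ∧ V ≤ H₀} with hGdef
    have hb : Basis (Fin (n - 1)) (ZMod p) ↥H₀ :=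
      Module.finBasisOfFinrankEq (ZMod p) ↥H₀ hH₀
    set e : ↥H₀ ≃ₗ[ZMod p] (Fin (n - 1) → ZMod p) := hb.equivFun with hedef
    have hΦmem : ∀ V : ↥G, finrank (ZMod p)
        ↥(Submodule.map (e : ↥H₀ →ₗ[ZMod p] (Fin (n - 1) → ZMod p))
          ((V : Submodule (ZMod p) (Fin n → ZMod p)).comap H₀.subtype)) = n - k := by
      intro V
      rw [LinearEquiv.finrank_map_eq, (Submodule.comapSubtypeEquivOfLe V.2.2).finrank_eq]
      exact V.2.1
    set Φ : ↥G → {W : Submodule (ZMod p) (Fin (n - 1) → ZMod p) //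
        finrank (ZMod p) ↥W = n - k} :=
      fun V => ⟨Submodule.map (e : ↥H₀ →ₗ[ZMod p] (Fin (n - 1) → ZMod p))
          ((V : Submodule (ZMod p) (Fin n → ZMod p)).comap H₀.subtype), hΦmem V⟩ with hΦdef
    have hΦinj : Function.Injective Φ := by
      intro V V' h
      have h1 := congrArg Subtype.val h
      have h2 := Submodule.map_injective_of_injective
        (f := (e : ↥H₀ →ₗ[ZMod p] (Fin (n - 1) → ZMod p))) e.injective h1
      have h3 := congrArg (Submodule.map H₀.subtype) h2
      rw [Submodule.map_comap_subtype, Submodule.map_comap_subtype,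
        inf_eq_right.mpr V.2.2, inf_eq_right.mpr V'.2.2] at h3
      exact Subtype.ext h3
    have hle : G.ncard ≤ 2 ^ (n - 1) * p ^ ((n - k) * (k - 1)) := by
      have hkk : (n - 1) - (n - k) = k - 1 := by omega
      calc G.ncard = Nat.card ↥G := (Nat.card_coe_set_eq G).symm
        _ ≤ Nat.card {W : Submodule (ZMod p) (Fin (n - 1) → ZMod p) //
              finrank (ZMod p) ↥W = n - k} :=
            Nat.card_le_card_of_injective Φ hΦinj
        _ ≤ 2 ^ (n - 1) * p ^ ((n - k) * ((n - 1) - (n - k))) :=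
            grassmannian_card_le p (n - 1) (n - k)
        _ = 2 ^ (n - 1) * p ^ ((n - k) * (k - 1)) := by rw [hkk]
    calc (G.ncard : ℝ) ≤ ((2 ^ (n - 1) * p ^ ((n - k) * (k - 1)) : ℕ) : ℝ) := by
          exact_mod_cast hle
      _ = 2 ^ (n - 1) * (p : ℝ) ^ ((k - 1) * (n - k)) := by
          rw [Nat.mul_comm (n - k) (k - 1)]
          push_cast
          ring
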